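/- arXiv:1106.4211 — 5 statements merged into one kernel-verified Lean document; each statement's English description precedes it below -/
import Mathlib

section
/- Suppose condition (INJ) holds and there exist constants C₁, C₂ > 0 such that C₁‖y‖_Y ≤ ‖y‖_opt ≤ C₂‖y‖_Y for all y ∈ Y. Then the energy norm of every trial function is equivalent to its X-norm with the same constants: C₁‖x‖_X ≤ ‖T x‖_Y ≤ C₂‖x‖_X for all x ∈ X. -/
open scoped RealInnerProductSpace

/-- The optimal test norm `‖y‖_opt = sup_{x ≠ 0} b(x,y)/‖x‖`. -/
noncomputable def optTestNorm {X Y : Type*} [NormedAddCommGroup X] [NormedSpace ℝ X]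
    [NormedAddCommGroup Y] [NormedSpace ℝ Y]
    (b : X →L[ℝ] Y →L[ℝ] ℝ) (y : Y) : ℝ :=
  ⨆ x : {x : X // x ≠ 0}, b x.1 y / ‖x.1‖

/-- Equivalence of the energy norm `‖T x‖_Y` with the norm of `X`,
with the same constants as in the test norm equivalence. -/
theorem dpg_energy_norm_equivalence {X Y : Type*}
    [NormedAddCommGroup X] [InnerProductSpace ℝ X] [CompleteSpace X]
    [NormedAddCommGroup Y] [InnerProductSpace ℝ Y] [CompleteSpace Y]
    (b : X →L[ℝ] Y →L[ℝ] ℝ) (T : X →L[ℝ] Y)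
    (hT : ∀ (x : X) (y : Y), ⟪T x, y⟫ = b x y)
    (hinj : ∀ w : X, (∀ y : Y, b w y = 0) → w = 0)
    (C₁ C₂ : ℝ) (hC₁ : 0 < C₁) (hC₂ : 0 < C₂)
    (hlow : ∀ y : Y, C₁ * ‖y‖ ≤ optTestNorm b y)
    (hup : ∀ y : Y, optTestNorm b y ≤ C₂ * ‖y‖) :
    ∀ x : X, C₁ * ‖x‖ ≤ ‖T x‖ ∧ ‖T x‖ ≤ C₂ * ‖x‖ := by
  set S := ContinuousLinearMap.adjoint T with hS
  have hbS : ∀ (x : X) (y : Y), (b x) y = ⟪x, S y⟫ := fun x y => by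
    rw [hS, ContinuousLinearMap.adjoint_inner_right, hT]
  have hterm : ∀ (y : Y) (x : X), x ≠ 0 → (b x) y / ‖x‖ ≤ ‖S y‖ := by
    intro y x hx
    rw [hbS, div_le_iff₀ (norm_pos_iff.mpr hx)]
    calc ⟪x, S y⟫ ≤ ‖x‖ * ‖S y‖ := real_inner_le_norm _ _
      _ = ‖S y‖ * ‖x‖ := mul_comm _ _
  have K1 : ∀ y : Y, C₁ * ‖y‖ ≤ ‖S y‖ := by
    intro y
    refine (hlow y).trans ?_
    exact Real.iSup_le (fun x => hterm y x.1 x.2) (norm_nonneg _)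
  have K2 : ∀ y : Y, ‖S y‖ ≤ C₂ * ‖y‖ := by
    intro y
    rcases eq_or_ne (S y) 0 with h | h
    · rw [h, norm_zero]; positivity
    · refine le_trans ?_ (hup y)
      have hb : BddAbove (Set.range fun x : {x : X // x ≠ 0} => (b x.1) y / ‖x.1‖) := by
        refine ⟨‖S y‖, ?_⟩
        rintro _ ⟨⟨x, hx⟩, rfl⟩
        exact hterm y x hx
      have hle := le_ciSup hb (⟨S y, h⟩ : {x : X // x ≠ 0})
      refine le_trans ?_ hle
      rw [hbS, real_inner_self_eq_norm_sq, sq, mul_div_assoc, div_self (norm_ne_zero_iff.mpr h),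
        mul_one]
  -- S is antilipschitz
  have hanti : AntilipschitzWith (C₁⁻¹).toNNReal S := by
    apply S.antilipschitz_of_bound
    intro y
    rw [Real.coe_toNNReal _ (by positivity)]
    rw [inv_mul_eq_div, le_div_iff₀ hC₁, mul_comm]
    exact K1 y
  -- S has dense range
  have hdense : (LinearMap.range (S : Y →ₗ[ℝ] X)).topologicalClosure = ⊤ := by
    rw [Submodule.topologicalClosure_eq_top_iff]
    rw [Submodule.eq_bot_iff]
    intro x hx
    apply hinj
    intro y
    rw [hbS, real_inner_comm]
    exact hx _ ⟨y, rfl⟩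
  have hbij : Function.Bijective S :=
    (S.bijective_iff_dense_range_and_antilipschitz).mpr ⟨hdense, _, hanti⟩
  intro x
  constructor
  · rcases eq_or_ne x 0 with rfl | hx
    · simp
    obtain ⟨y, hy⟩ := hbij.2 x
    have h1 : ‖x‖ ^ 2 = ⟪T x, y⟫ := by
      rw [hT, hbS, hy, real_inner_self_eq_norm_sq]
    have h2 : ⟪T x, y⟫ ≤ ‖T x‖ * ‖y‖ := real_inner_le_norm _ _
    have h3 : C₁ * ‖y‖ ≤ ‖x‖ := by rw [← hy]; exact K1 y
    have hx' : 0 < ‖x‖ := norm_pos_iff.mpr hx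
    nlinarith [norm_nonneg (T x), norm_nonneg y]
  · have h1 : ‖T x‖ ^ 2 = ⟪x, S (T x)⟫ := by
      rw [← hbS, ← hT, real_inner_self_eq_norm_sq]
    have h2 : ⟪x, S (T x)⟫ ≤ ‖x‖ * ‖S (T x)‖ := real_inner_le_norm _ _
    have h3 := K2 (T x)
    rcases eq_or_ne (T x) 0 with h | h
    · rw [h, norm_zero]; positivity
    · have hTx : 0 < ‖T x‖ := norm_pos_iff.mpr h
      nlinarith [norm_nonneg x]
end

section
/- Let X_h be a finite-dimensional subspace of X, let l be a continuous linear functional on Y, and let τ_l ∈ Y be its Riesz representative, i.e., ⟪τ_l, y⟫_Y = l(y) for all y ∈ Y. Then x_h ∈ X_h satisfies the DPG equations b(x_h, y) = l(y) for all y ∈ T(X_h) if and only if x_h is a least-squares minimizer, i.e., ‖τ_l − T x_h‖_Y ≤ ‖τ_l − T z‖_Y for all z ∈ X_h. -/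
open scoped RealInnerProductSpace

/-- The DPG method is a least-squares method in a nonstandard inner product. -/
theorem dpg_least_squares {X Y : Type*}
    [NormedAddCommGroup X] [InnerProductSpace ℝ X] [CompleteSpace X]
    [NormedAddCommGroup Y] [InnerProductSpace ℝ Y] [CompleteSpace Y]
    (b : X →L[ℝ] Y →L[ℝ] ℝ) (T : X →L[ℝ] Y)
    (hT : ∀ (x : X) (y : Y), ⟪T x, y⟫ = b x y)
    (Xh : Submodule ℝ X) (hfin : FiniteDimensional ℝ Xh)
    (l : Y →L[ℝ] ℝ) (τl : Y) (hτl : ∀ y : Y, ⟪τl, y⟫ = l y)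
    (xh : X) (hxh : xh ∈ Xh) :
    (∀ z ∈ Xh, b xh (T z) = l (T z)) ↔
      (∀ z ∈ Xh, ‖τl - T xh‖ ≤ ‖τl - T z‖) := by
  have key : ∀ z : X, (b xh (T z) = l (T z)) ↔ ⟪τl - T xh, T z⟫ = 0 := by
    intro z
    rw [inner_sub_left, hτl, hT, sub_eq_zero]
    exact ⟨fun h => h.symm, fun h => h.symm⟩
  constructor
  · intro h z hz
    have horth : ⟪τl - T xh, T (xh - z)⟫ = 0 :=
      (key (xh - z)).mp (h (xh - z) (Xh.sub_mem hxh hz))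
    have hdecomp : τl - T z = (τl - T xh) + T (xh - z) := by
      rw [map_sub]; abel
    have hsq : ‖τl - T z‖ ^ 2 = ‖τl - T xh‖ ^ 2 + ‖T (xh - z)‖ ^ 2 := by
      rw [hdecomp, norm_add_sq_real, horth]; ring
    nlinarith [norm_nonneg (τl - T z), norm_nonneg (τl - T xh),
      sq_nonneg (‖T (xh - z)‖)]
  · intro h z hz
    rw [key]
    by_contra hc
    set c := ⟪τl - T xh, T z⟫ with hcdef
    have hTz : T z ≠ 0 := by
      intro h0
      apply hc
      rw [hcdef, h0, inner_zero_right]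
    have hTznorm : (0:ℝ) < ‖T z‖ ^ 2 := pow_pos (norm_pos_iff.mpr hTz) 2
    set t : ℝ := c / ‖T z‖ ^ 2 with htdef
    have hz' : xh + t • z ∈ Xh := Xh.add_mem hxh (Xh.smul_mem t hz)
    have hle := h (xh + t • z) hz'
    have hdecomp : τl - T (xh + t • z) = (τl - T xh) - t • T z := by
      rw [map_add, map_smul]; abel
    have hsq : ‖τl - T (xh + t • z)‖ ^ 2
        = ‖τl - T xh‖ ^ 2 - 2 * t * c + t ^ 2 * ‖T z‖ ^ 2 := by
      rw [hdecomp, norm_sub_sq_real, real_inner_smul_right, norm_smul,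
        mul_pow, ← hcdef]
      simp [abs_sq, sq_abs]
      ring
    have hval : ‖τl - T (xh + t • z)‖ ^ 2 = ‖τl - T xh‖ ^ 2 - c ^ 2 / ‖T z‖ ^ 2 := by
      rw [hsq, htdef]
      field_simp
      ring
    have hcpos : 0 < c ^ 2 / ‖T z‖ ^ 2 := by
      apply div_pos _ hTznorm
      positivity
    nlinarith [norm_nonneg (τl - T (xh + t • z)), norm_nonneg (τl - T xh)]
end

section
/- Let X_h be a subspace of X and l a continuous linear functional on Y. Suppose x ∈ X satisfies b(x, y) = l(y) for all y ∈ Y, and x_h ∈ X_h satisfies b(x_h, y) = l(y) for all y ∈ T(X_h). Then the Galerkin orthogonality ⟪T(x − x_h), T z⟫_Y = 0 holds for all z ∈ X_h, and consequently the DPG solution is the best approximation in the energy norm: ‖T(x − x_h)‖_Y ≤ ‖T(x − z)‖_Y for all z ∈ X_h. -/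
open scoped RealInnerProductSpace

/-- Galerkin orthogonality in the test space inner product, and best approximation
in the energy norm, for the DPG method. -/
theorem dpg_galerkin_orthogonality {X Y : Type*}
    [NormedAddCommGroup X] [InnerProductSpace ℝ X] [CompleteSpace X]
    [NormedAddCommGroup Y] [InnerProductSpace ℝ Y] [CompleteSpace Y]
    (b : X →L[ℝ] Y →L[ℝ] ℝ) (T : X →L[ℝ] Y)
    (hT : ∀ (x : X) (y : Y), ⟪T x, y⟫ = b x y)
    (Xh : Submodule ℝ X) (l : Y →L[ℝ] ℝ)
    (x : X) (hx : ∀ y : Y, b x y = l y)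
    (xh : X) (hxh : xh ∈ Xh)
    (hxhsol : ∀ z ∈ Xh, b xh (T z) = l (T z)) :
    (∀ z ∈ Xh, ⟪T (x - xh), T z⟫ = 0) ∧
      (∀ z ∈ Xh, ‖T (x - xh)‖ ≤ ‖T (x - z)‖) := by
  have horth : ∀ z ∈ Xh, ⟪T (x - xh), T z⟫ = 0 := by
    intro z hz
    rw [hT, map_sub, ContinuousLinearMap.sub_apply, hx, hxhsol z hz, sub_self]
  refine ⟨horth, ?_⟩
  intro z hz
  have key : T (x - z) = T (x - xh) + T (xh - z) := by
    rw [← map_add]; congr 1; abel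
  have hperp : ⟪T (x - xh), T (xh - z)⟫ = 0 :=
    horth _ (Xh.sub_mem hxh hz)
  have : ‖T (x - z)‖ ^ 2 = ‖T (x - xh)‖ ^ 2 + ‖T (xh - z)‖ ^ 2 := by
    rw [key, norm_add_sq_real, hperp]; ring
  nlinarith [norm_nonneg (T (x - xh)), norm_nonneg (T (x - z)), sq_nonneg ‖T (xh - z)‖]
end

section
/- Suppose condition (INJ) holds and there exists a constant C₁ > 0 such that C₁‖y‖_Y ≤ ‖y‖_opt for all y ∈ Y. Then for every continuous linear functional l on Y there exists a unique x ∈ X such that b(x, y) = l(y) for all y ∈ Y. -/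
open scoped RealInnerProductSpace

/-- Unique solvability of the (ultraweak) variational formulation. -/
theorem dpg_unique_solvability {X Y : Type*}
    [NormedAddCommGroup X] [InnerProductSpace ℝ X] [CompleteSpace X]
    [NormedAddCommGroup Y] [InnerProductSpace ℝ Y] [CompleteSpace Y]
    (b : X →L[ℝ] Y →L[ℝ] ℝ)
    (hinj : ∀ w : X, (∀ y : Y, b w y = 0) → w = 0)
    (C₁ : ℝ) (hC₁ : 0 < C₁)
    (hlow : ∀ y : Y, C₁ * ‖y‖ ≤ optTestNorm b y)
    (l : Y →L[ℝ] ℝ) :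
    ∃! x : X, ∀ y : Y, b x y = l y := by
  classical
  set D := InnerProductSpace.toDual ℝ X with hD
  -- the operator A : Y →L[ℝ] X with ⟪A y, x⟫ = b x y
  let A : Y →L[ℝ] X :=
    { toFun := fun y => D.symm (b.flip y)
      map_add' := by intro y₁ y₂; simp
      map_smul' := by intro r y; simp
      cont := (D.symm.isometry.isUniformInducing.uniformContinuous.continuous).comp b.flip.continuous }
  have hA : ∀ (x : X) (y : Y), ⟪A y, x⟫ = b x y := by
    intro x y
    exact InnerProductSpace.toDual_symm_apply
  -- optimal test norm bounded by ‖b.flip y‖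
  have hnorm : ∀ y : Y, optTestNorm b y ≤ ‖b.flip y‖ := by
    intro y
    refine Real.iSup_le (fun x => ?_) (norm_nonneg _)
    have hx : (0:ℝ) < ‖x.1‖ := norm_pos_iff.mpr x.2
    rw [div_le_iff₀ hx]
    calc b x.1 y ≤ |b x.1 y| := le_abs_self _
      _ = ‖(b.flip y) x.1‖ := by simp [Real.norm_eq_abs]
      _ ≤ ‖b.flip y‖ * ‖x.1‖ := (b.flip y).le_opNorm x.1
  have hbelow : ∀ y : Y, C₁ * ‖y‖ ≤ ‖A y‖ := by
    intro y
    have : ‖A y‖ = ‖b.flip y‖ := by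
      show ‖D.symm (b.flip y)‖ = ‖b.flip y‖
      exact D.symm.norm_map _
    rw [this]
    exact (hlow y).trans (hnorm y)
  -- A is antilipschitz
  have hanti : AntilipschitzWith ⟨C₁⁻¹, (inv_nonneg.mpr hC₁.le)⟩ A := by
    refine ContinuousLinearMap.antilipschitz_of_bound A (fun y => ?_)
    show ‖y‖ ≤ C₁⁻¹ * ‖A y‖
    rw [← div_eq_inv_mul, le_div_iff₀ hC₁, mul_comm]
    exact hbelow y
  have hker : LinearMap.ker (A : Y →ₗ[ℝ] X) = ⊥ := by
    exact LinearMap.ker_eq_bot.mpr hanti.injective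
  -- range of A is closed
  have hclosed : IsClosed (Set.range A) := hanti.isClosed_range A.uniformContinuous
  -- range of A is all of X
  have hrange : LinearMap.range (A : Y →ₗ[ℝ] X) = ⊤ := by
    have horth : (LinearMap.range (A : Y →ₗ[ℝ] X))ᗮ = ⊥ := by
      rw [Submodule.eq_bot_iff]
      intro w hw
      refine hinj w (fun y => ?_)
      have := hw (A y) (LinearMap.mem_range_self _ y)
      rw [← hA w y]
      exact this
    have h1 : (LinearMap.range (A : Y →ₗ[ℝ] X))ᗮᗮ = (LinearMap.range (A : Y →ₗ[ℝ] X)).topologicalClosure :=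
      Submodule.orthogonal_orthogonal_eq_closure _
    have h2 : (LinearMap.range (A : Y →ₗ[ℝ] X)).topologicalClosure = LinearMap.range (A : Y →ₗ[ℝ] X) := by
      apply le_antisymm
      · intro x hx
        exact hclosed.closure_subset_iff.mpr (by intro z hz; exact hz) hx
      · exact Submodule.le_topologicalClosure _
    rw [horth, Submodule.bot_orthogonal_eq_top] at h1
    rw [← h2, ← h1]
  -- A is a continuous linear equivalence
  let e : Y ≃L[ℝ] X := ContinuousLinearEquiv.ofBijective A hker hrange
  -- the solution
  refine ⟨D.symm (l.comp (e.symm : X →L[ℝ] Y)), fun y => ?_, fun x' hx' => ?_⟩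
  · rw [← hA _ y, real_inner_comm]
    have : ⟪D.symm (l.comp (e.symm : X →L[ℝ] Y)), A y⟫ = l (e.symm (A y)) :=
      InnerProductSpace.toDual_symm_apply
    rw [this]
    congr 1
    have : A y = e y := rfl
    rw [this, ContinuousLinearEquiv.symm_apply_apply]
  · have hz : ∀ y : Y, b (x' - D.symm (l.comp (e.symm : X →L[ℝ] Y))) y = 0 := by
      intro y
      rw [map_sub, ContinuousLinearMap.sub_apply, hx' y]
      have h1 : b (D.symm (l.comp (e.symm : X →L[ℝ] Y))) y = l y := by
        rw [← hA _ y, real_inner_comm]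
        have : ⟪D.symm (l.comp (e.symm : X →L[ℝ] Y)), A y⟫ = l (e.symm (A y)) :=
          InnerProductSpace.toDual_symm_apply
        rw [this]
        congr 1
        have : A y = e y := rfl
        rw [this, ContinuousLinearEquiv.symm_apply_apply]
      rw [h1, sub_self]
    have := hinj _ hz
    exact sub_eq_zero.mp this
end

section
/- Suppose condition (INJ) holds. Let X_h be a finite-dimensional subspace of X and let l be a continuous linear functional on Y. Then there exists a unique x_h ∈ X_h such that b(x_h, y) = l(y) for all y ∈ T(X_h). -/
open scoped RealInnerProductSpace

/-- Unique solvability of the discrete DPG method. -/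
theorem dpg_discrete_unique_solvability {X Y : Type*}
    [NormedAddCommGroup X] [InnerProductSpace ℝ X] [CompleteSpace X]
    [NormedAddCommGroup Y] [InnerProductSpace ℝ Y] [CompleteSpace Y]
    (b : X →L[ℝ] Y →L[ℝ] ℝ) (T : X →L[ℝ] Y)
    (hT : ∀ (x : X) (y : Y), ⟪T x, y⟫ = b x y)
    (hinj : ∀ w : X, (∀ y : Y, b w y = 0) → w = 0)
    (Xh : Submodule ℝ X) (hfin : FiniteDimensional ℝ Xh)
    (l : Y →L[ℝ] ℝ) :
    ∃! xh : X, xh ∈ Xh ∧ ∀ z ∈ Xh, b xh (T z) = l (T z) := by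
  have Tinj : ∀ w : X, T w = 0 → w = 0 := by
    intro w hw
    apply hinj
    intro y
    rw [← hT, hw, inner_zero_left]
  have key : ∀ w : X, b w (T w) = 0 → w = 0 := by
    intro w hw
    apply Tinj
    have : ⟪T w, T w⟫ = 0 := by rw [hT]; exact hw
    exact inner_self_eq_zero.mp this
  let S : Xh →ₗ[ℝ] Module.Dual ℝ Xh :=
    { toFun := fun x =>
        { toFun := fun z => b x (T z)
          map_add' := by intro a c; simp
          map_smul' := by intro a c; simp }
      map_add' := by intro a c; ext z; simp
      map_smul' := by intro a c; ext z; simp }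
  have Sinj : Function.Injective S := by
    rw [← LinearMap.ker_eq_bot, LinearMap.ker_eq_bot']
    intro x hx
    have hx' : b (x : X) (T x) = 0 := by
      have := congrArg (fun f => f x) hx
      simpa [S] using this
    have : (x : X) = 0 := key _ hx'
    exact Subtype.ext this
  have Ssurj : Function.Surjective S := by
    have hdim : Module.finrank ℝ Xh = Module.finrank ℝ (Module.Dual ℝ Xh) :=
      (Subspace.dual_finrank_eq (V := Xh)).symm
    exact (LinearMap.injective_iff_surjective_of_finrank_eq_finrank hdim).mp Sinj
  obtain ⟨x, hx⟩ := Ssurj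
    { toFun := fun z => l (T z)
      map_add' := by intro a c; simp
      map_smul' := by intro a c; simp }
  refine ⟨(x : X), ⟨x.2, ?_⟩, ?_⟩
  · intro z hz
    have := congrArg (fun f => f ⟨z, hz⟩) hx
    simpa [S] using this
  · rintro y ⟨hyX, hy⟩
    have hx' : ∀ z ∈ Xh, b (x : X) (T z) = l (T z) := by
      intro z hz
      have := congrArg (fun f => f ⟨z, hz⟩) hx
      simpa [S] using this
    have hmem : y - (x : X) ∈ Xh := Xh.sub_mem hyX x.2
    have hzero : b (y - (x : X)) (T (y - (x : X))) = 0 := by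
      have h1 := hy _ hmem
      have h2 := hx' _ hmem
      simp only [map_sub, ContinuousLinearMap.sub_apply] at h1 h2 ⊢
      linarith
    have := key _ hzero
    have : y = (x : X) := by
      have h := sub_eq_zero.mp this
      exact h
    exact this
end
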